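/- Let s ≥ 1, let f : X → ℂ be measurable with ∫_X ω^{−s}|f|² dμ < ∞, let n ≥ 0, let Ψ : Xⁿ → ℂ be measurable, symmetric, and square-integrable with respect to μⁿ, and let Ξ : X^{n+1} → ℂ be measurable and symmetric with ∫_{X^{n+1}} (1 + Σ_{j=1}^{n+1} ω(k_j))^{s} |Ξ|² dμ^{n+1} < ∞. With Φ(k_1,…,k_{n+1}) = Σ_{j=1}^{n+1} f(k_j) Ψ(k_1,…,k̂_j,…,k_{n+1}) (the j-th variable omitted), the function conj(Φ)·Ξ is μ^{n+1}-integrable and ∫_{X^{n+1}} conj(Φ(k)) Ξ(k) dμ^{n+1}(k) = (n+1) ∫_{Xⁿ} conj(Ψ(k_1,…,k_n)) (∫_X conj(f(κ)) Ξ(k_1,…,k_n,κ) dμ(κ)) dμⁿ. (This identity expresses that the creation operator a†(f) is the adjoint of the annihilation operator a(f) with respect to the duality pairing of the Fock scale.) -/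

import Mathlib

open MeasureTheory ENNReal

private lemma ennreal_mul_le_sq_add_sq (a b : ℝ≥0∞) : a * b ≤ a ^ 2 + b ^ 2 := by
  rcases le_total a b with h | h
  · calc a * b ≤ b * b := mul_le_mul' h le_rfl
      _ = b ^ 2 := (sq b).symm
      _ ≤ a ^ 2 + b ^ 2 := le_add_self
  · calc a * b ≤ a * a := mul_le_mul' le_rfl h
      _ = a ^ 2 := (sq a).symm
      _ ≤ a ^ 2 + b ^ 2 := self_le_add_right _ _

/-- (the creation operator is the adjoint of the annihilation operator
with respect to the duality pairing of the Fock scale). With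
`Φ(k_1,…,k_{n+1}) = Σ_j f(k_j) Ψ(…,k̂_j,…)` for a symmetric square-integrable `Ψ`
on `Xⁿ`, and a symmetric `Ξ` on `X^(n+1)` with `∫ (1+Σω)^s |Ξ|² < ∞`, the function
`conj(Φ)·Ξ` is integrable and
`∫ conj(Φ)Ξ dμ^(n+1) = (n+1) ∫ conj(Ψ(k)) (∫ conj(f(κ)) Ξ(k,κ) dμ(κ)) dμⁿ`. -/
theorem creation_adjoint_annihilation
    {X : Type*} [MeasurableSpace X] (μ : Measure X) [SigmaFinite μ]
    (ω : X → ℝ) (hω : Measurable ω) (m : ℝ) (hm : 0 < m) (hωm : ∀ k, m ≤ ω k)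
    (s : ℝ) (hs : 1 ≤ s)
    (f : X → ℂ) (hf : Measurable f)
    (hfs : (∫⁻ k, ENNReal.ofReal (ω k ^ (-s) * ‖f k‖ ^ 2) ∂μ) ≠ ⊤)
    (n : ℕ) (Ψ : (Fin n → X) → ℂ) (hΨ : Measurable Ψ)
    (hsymΨ : ∀ σ : Equiv.Perm (Fin n), ∀ k : Fin n → X, Ψ (k ∘ σ) = Ψ k)
    (hΨ2 : (∫⁻ k, ENNReal.ofReal (‖Ψ k‖ ^ 2) ∂(Measure.pi fun _ : Fin n => μ)) ≠ ⊤)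
    (Ξ : (Fin (n + 1) → X) → ℂ) (hΞ : Measurable Ξ)
    (hsymΞ : ∀ σ : Equiv.Perm (Fin (n + 1)), ∀ k : Fin (n + 1) → X, Ξ (k ∘ σ) = Ξ k)
    (hΞs : (∫⁻ k, ENNReal.ofReal ((1 + ∑ j : Fin (n + 1), ω (k j)) ^ s * ‖Ξ k‖ ^ 2)
        ∂(Measure.pi fun _ : Fin (n + 1) => μ)) ≠ ⊤) :
    Integrable
      (fun k => (starRingEnd ℂ) (∑ j : Fin (n + 1), f (k j) * Ψ (fun i => k (j.succAbove i)))
        * Ξ k) (Measure.pi fun _ : Fin (n + 1) => μ) ∧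
    ∫ k, (starRingEnd ℂ) (∑ j : Fin (n + 1), f (k j) * Ψ (fun i => k (j.succAbove i))) * Ξ k
        ∂(Measure.pi fun _ : Fin (n + 1) => μ) =
      ((n : ℂ) + 1) *
        ∫ k, (starRingEnd ℂ) (Ψ k) * (∫ κ, (starRingEnd ℂ) (f κ) * Ξ (Fin.snoc k κ) ∂μ)
          ∂(Measure.pi fun _ : Fin n => μ) := by
  have hωpos : ∀ k, (0:ℝ) < ω k := fun k => lt_of_lt_of_le hm (hωm k)
  set νn : Measure (Fin n → X) := Measure.pi fun _ : Fin n => μ with hνn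
  set ν : Measure (Fin (n+1) → X) := Measure.pi fun _ : Fin (n+1) => μ with hν
  -- measurability of the snoc map
  have hsnoc_meas : Measurable fun p : X × (Fin n → X) => (Fin.snoc p.2 p.1 : Fin (n+1) → X) := by
    refine measurable_pi_iff.2 fun i => ?_
    induction i using Fin.lastCases with
    | last => simpa using measurable_fst
    | cast i => simpa using (show Measurable fun p : X × (Fin n → X) => p.2 i by fun_prop)
  set h : X × (Fin n → X) → ℂ :=
    fun p => (starRingEnd ℂ) (f p.1 * Ψ p.2) * Ξ (Fin.snoc p.2 p.1) with hh
  have hh_meas : Measurable h :=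
    (continuous_star.measurable.comp
      ((hf.comp measurable_fst).mul (hΨ.comp measurable_snd))).mul (hΞ.comp hsnoc_meas)
  -- rpow facts
  have hcancel : ∀ x, ω x ^ (-(s/2)) * ω x ^ (s/2) = 1 := fun x => by
    rw [← Real.rpow_add (hωpos x)]; simp
  have hsq : ∀ (x : X) (r : ℝ), (ω x ^ r) ^ 2 = ω x ^ (r * 2) := fun x r => by
    rw [← Real.rpow_natCast (ω x ^ r) 2, ← Real.rpow_mul (hωpos x).le]
    norm_num
  set u : X × (Fin n → X) → ℝ≥0∞ :=
    fun p => ENNReal.ofReal (ω p.1 ^ (-(s/2)) * ‖f p.1‖ * ‖Ψ p.2‖) with hu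
  set v : X × (Fin n → X) → ℝ≥0∞ :=
    fun p => ENNReal.ofReal (ω p.1 ^ (s/2) * ‖Ξ (Fin.snoc p.2 p.1)‖) with hvdef
  have hb : ∀ (x : X) (r : ℝ), 0 ≤ ω x ^ r := fun x r => Real.rpow_nonneg (hωpos x).le r
  have hu_meas : Measurable u := by
    refine Measurable.ennreal_ofReal ?_
    fun_prop
  have hv_meas : Measurable v := by
    refine Measurable.ennreal_ofReal (Measurable.mul ?_ ((hΞ.comp hsnoc_meas).norm))
    fun_prop
  have hnorm : ∀ p, ENNReal.ofReal ‖h p‖ = u p * v p := by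
    intro p
    rw [hu, hvdef, ← ENNReal.ofReal_mul
      (mul_nonneg (mul_nonneg (hb _ _) (norm_nonneg _)) (norm_nonneg _))]
    congr 1
    have h1 : ‖h p‖ = ‖f p.1‖ * ‖Ψ p.2‖ * ‖Ξ (Fin.snoc p.2 p.1)‖ := by
      simp [hh, norm_mul, RCLike.norm_conj]
    rw [h1]
    have h2 := hcancel p.1
    linear_combination (-(‖f p.1‖ * ‖Ψ p.2‖ * ‖Ξ (Fin.snoc p.2 p.1)‖)) * h2
  have hu2 : ∫⁻ p, u p ^ 2 ∂(μ.prod νn) ≠ ⊤ := by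
    have hueq : ∀ p : X × (Fin n → X), u p ^ 2 =
        ENNReal.ofReal (ω p.1 ^ (-s) * ‖f p.1‖ ^ 2) * ENNReal.ofReal (‖Ψ p.2‖ ^ 2) := by
      intro p
      rw [hu, ← ENNReal.ofReal_pow
        (mul_nonneg (mul_nonneg (hb _ _) (norm_nonneg _)) (norm_nonneg _)),
        ← ENNReal.ofReal_mul (mul_nonneg (hb _ _) (sq_nonneg _))]
      congr 1
      have h2 : (ω p.1 ^ (-(s/2))) ^ 2 = ω p.1 ^ (-s) := by
        rw [hsq]; congr 1; ring
      calc (ω p.1 ^ (-(s/2)) * ‖f p.1‖ * ‖Ψ p.2‖) ^ 2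
          = (ω p.1 ^ (-(s/2))) ^ 2 * ‖f p.1‖ ^ 2 * ‖Ψ p.2‖ ^ 2 := by ring
        _ = ω p.1 ^ (-s) * ‖f p.1‖ ^ 2 * ‖Ψ p.2‖ ^ 2 := by rw [h2]
    calc ∫⁻ p, u p ^ 2 ∂(μ.prod νn)
        = ∫⁻ p, ENNReal.ofReal (ω p.1 ^ (-s) * ‖f p.1‖ ^ 2)
            * ENNReal.ofReal (‖Ψ p.2‖ ^ 2) ∂(μ.prod νn) := lintegral_congr hueq
      _ = (∫⁻ x, ENNReal.ofReal (ω x ^ (-s) * ‖f x‖ ^ 2) ∂μ)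
            * ∫⁻ y, ENNReal.ofReal (‖Ψ y‖ ^ 2) ∂νn := by
          have ha1 : Measurable fun x : X => ENNReal.ofReal (ω x ^ (-s) * ‖f x‖ ^ 2) := by
            refine Measurable.ennreal_ofReal ?_
            fun_prop
          exact lintegral_prod_mul ha1.aemeasurable
            ((hΨ.norm.pow_const 2).ennreal_ofReal).aemeasurable
      _ ≠ ⊤ := ENNReal.mul_ne_top hfs hΨ2
  -- the last-coordinate measurable equivalence
  have hesymm : ∀ p : X × (Fin n → X),
      (MeasurableEquiv.piFinSuccAbove (fun _ : Fin (n+1) => X) (Fin.last n)).symm p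
        = Fin.snoc p.2 p.1 := by
    intro p
    exact Fin.insertNth_last' p.1 p.2
  have hv2 : ∫⁻ p, v p ^ 2 ∂(μ.prod νn) ≠ ⊤ := by
    set G : (Fin (n+1) → X) → ℝ≥0∞ :=
      fun k => ENNReal.ofReal ((1 + ∑ j : Fin (n+1), ω (k j)) ^ s * ‖Ξ k‖ ^ 2) with hG
    have hle : ∀ p : X × (Fin n → X), v p ^ 2 ≤ G (Fin.snoc p.2 p.1) := by
      intro p
      rw [hvdef, hG, ← ENNReal.ofReal_pow (mul_nonneg (hb _ _) (norm_nonneg _))]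
      apply ENNReal.ofReal_le_ofReal
      have h1 : (ω p.1 ^ (s/2) * ‖Ξ (Fin.snoc p.2 p.1)‖) ^ 2
          = ω p.1 ^ s * ‖Ξ (Fin.snoc p.2 p.1)‖ ^ 2 := by
        have h2 : (ω p.1 ^ (s/2)) ^ 2 = ω p.1 ^ s := by
          rw [hsq]; congr 1; ring
        calc (ω p.1 ^ (s/2) * ‖Ξ (Fin.snoc p.2 p.1)‖) ^ 2
            = (ω p.1 ^ (s/2)) ^ 2 * ‖Ξ (Fin.snoc p.2 p.1)‖ ^ 2 := by ring
          _ = ω p.1 ^ s * ‖Ξ (Fin.snoc p.2 p.1)‖ ^ 2 := by rw [h2]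
      rw [h1]
      refine mul_le_mul_of_nonneg_right ?_ (by positivity)
      refine Real.rpow_le_rpow (hωpos p.1).le ?_ (le_trans zero_le_one hs)
      have hsum : ∑ j : Fin (n+1), ω ((Fin.snoc p.2 p.1 : Fin (n+1) → X) j)
          = (∑ i : Fin n, ω (p.2 i)) + ω p.1 := by
        rw [Fin.sum_univ_castSucc]; simp
      rw [hsum]
      have hnn : (0:ℝ) ≤ ∑ i : Fin n, ω (p.2 i) :=
        Finset.sum_nonneg fun i _ => (hωpos _).le
      linarith
    have hmp : MeasurePreserving
        (MeasurableEquiv.piFinSuccAbove (fun _ : Fin (n+1) => X) (Fin.last n)).symm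
        (μ.prod νn) ν :=
      (measurePreserving_piFinSuccAbove (fun _ : Fin (n+1) => μ) (Fin.last n)).symm _
    have heq : ∫⁻ p, G (Fin.snoc p.2 p.1) ∂(μ.prod νn) = ∫⁻ k, G k ∂ν := by
      have := hmp.lintegral_comp_emb (MeasurableEquiv.measurableEmbedding _) G
      rw [← this]
      refine lintegral_congr fun p => ?_
      rw [hesymm]
    refine ne_top_of_le_ne_top ?_ (lintegral_mono hle)
    rw [heq]
    exact hΞs
  -- integrability of h
  have hInt : Integrable h (μ.prod νn) := by
    refine ⟨hh_meas.aestronglyMeasurable, ?_⟩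
    rw [hasFiniteIntegral_iff_norm]
    calc ∫⁻ p, ENNReal.ofReal ‖h p‖ ∂(μ.prod νn)
        = ∫⁻ p, u p * v p ∂(μ.prod νn) := lintegral_congr hnorm
      _ ≤ ∫⁻ p, (u p ^ 2 + v p ^ 2) ∂(μ.prod νn) :=
          lintegral_mono fun p => ennreal_mul_le_sq_add_sq _ _
      _ = (∫⁻ p, u p ^ 2 ∂(μ.prod νn)) + ∫⁻ p, v p ^ 2 ∂(μ.prod νn) :=
          lintegral_add_left (hu_meas.pow_const 2) _
      _ < ⊤ := ENNReal.add_lt_top.2 ⟨hu2.lt_top, hv2.lt_top⟩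
  -- symmetry: insertNth vs snoc
  have hperm : ∀ (j : Fin (n+1)) (x : X) (y : Fin n → X),
      Ξ (j.insertNth x y) = Ξ (Fin.snoc y x) := by
    intro j x y
    set σ : Equiv.Perm (Fin (n+1)) :=
      (finSuccEquiv' j).trans (finSuccEquiv' (Fin.last n)).symm with hσ
    have hfun : (Fin.snoc y x : Fin (n+1) → X) ∘ σ = j.insertNth x y := by
      funext i
      refine j.succAboveCases ?_ ?_ i
      · simp [hσ, finSuccEquiv'_at, finSuccEquiv'_symm_none, Fin.insertNth_apply_same]
      · intro l
        simp [hσ, finSuccEquiv'_succAbove, finSuccEquiv'_symm_some,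
          Fin.succAbove_last, Fin.insertNth_apply_succAbove]
    rw [← hfun, hsymΞ σ (Fin.snoc y x)]
  -- for every index j the corresponding summand is integrable with integral ∫ h
  have hkey : ∀ j : Fin (n+1),
      Integrable (fun k => (starRingEnd ℂ) (f (k j) * Ψ (fun i => k (j.succAbove i))) * Ξ k) ν ∧
      ∫ k, (starRingEnd ℂ) (f (k j) * Ψ (fun i => k (j.succAbove i))) * Ξ k ∂ν
        = ∫ p, h p ∂(μ.prod νn) := by
    intro j
    set gj : (Fin (n+1) → X) → ℂ :=
      fun k => (starRingEnd ℂ) (f (k j) * Ψ (fun i => k (j.succAbove i))) * Ξ k with hgj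
    have hmp : MeasurePreserving
        (MeasurableEquiv.piFinSuccAbove (fun _ : Fin (n+1) => X) j).symm (μ.prod νn) ν :=
      (measurePreserving_piFinSuccAbove (fun _ : Fin (n+1) => μ) j).symm _
    have hcomp : (fun p : X × (Fin n → X) =>
        gj ((MeasurableEquiv.piFinSuccAbove (fun _ : Fin (n+1) => X) j).symm p)) = h := by
      funext p
      have he : (MeasurableEquiv.piFinSuccAbove (fun _ : Fin (n+1) => X) j).symm p
          = j.insertNth p.1 p.2 := rfl
      rw [he]
      simp only [hgj, hh, Fin.insertNth_apply_same, Fin.insertNth_apply_succAbove,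
        hperm j p.1 p.2]
    constructor
    · refine (hmp.integrable_comp_emb (MeasurableEquiv.measurableEmbedding _)).1 ?_
      show Integrable (fun p : X × (Fin n → X) =>
        gj ((MeasurableEquiv.piFinSuccAbove (fun _ : Fin (n+1) => X) j).symm p)) (μ.prod νn)
      rw [hcomp]; exact hInt
    · rw [← hmp.integral_comp (MeasurableEquiv.measurableEmbedding _) gj]
      exact congrArg (fun F => ∫ p, F p ∂(μ.prod νn)) hcomp
  have hG : ∀ k : Fin (n+1) → X,
      (starRingEnd ℂ) (∑ j : Fin (n+1), f (k j) * Ψ (fun i => k (j.succAbove i))) * Ξ k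
      = ∑ j : Fin (n+1), (starRingEnd ℂ) (f (k j) * Ψ (fun i => k (j.succAbove i))) * Ξ k := by
    intro k; rw [map_sum, Finset.sum_mul]
  constructor
  · simp only [hG]
    exact integrable_finset_sum _ fun j _ => (hkey j).1
  · have h1 : ∫ k, (starRingEnd ℂ)
        (∑ j : Fin (n+1), f (k j) * Ψ (fun i => k (j.succAbove i))) * Ξ k ∂ν
        = (n+1 : ℕ) • ∫ p, h p ∂(μ.prod νn) := by
      simp only [hG]
      rw [integral_finset_sum _ fun j _ => (hkey j).1]
      rw [Finset.sum_congr rfl fun j _ => (hkey j).2]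
      simp
    have h2 : ∫ p, h p ∂(μ.prod νn) = ∫ y, ∫ x, h (x, y) ∂μ ∂νn := by
      rw [integral_prod _ hInt]
      exact integral_integral_swap hInt
    have h3 : ∀ y : Fin n → X, ∫ x, h (x, y) ∂μ
        = (starRingEnd ℂ) (Ψ y) * ∫ κ, (starRingEnd ℂ) (f κ) * Ξ (Fin.snoc y κ) ∂μ := by
      intro y
      rw [← integral_const_mul]
      refine integral_congr_ae (Filter.Eventually.of_forall fun x => ?_)
      simp only [hh, map_mul]
      ring
    rw [h1, h2]
    simp only [h3]
    rw [nsmul_eq_mul]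
    push_cast
    ring
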